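/- For every integer n ≥ 1, the piecewise function vol(t) defined by vol(t) = -(4(4n-1)t² + 12t - 9(2n+1))/(8n(4n+1)) for 0 ≤ t ≤ 3/4, vol(t) = (3-2t)²/(8n) for 3/4 ≤ t ≤ 3/2, and vol(t) = 0 for t ≥ 3/2, satisfies (8n(4n+1)/(9(2n+1))) · ∫₀^∞ vol(t) dt = (3n+1)/(2(2n+1)). -/

import Mathlib

open MeasureTheory

theorem stmt_0 (n : ℕ) (hn : 1 ≤ n) :
    (8 * (n : ℝ) * (4 * n + 1) / (9 * (2 * n + 1))) *
      ∫ t in Set.Ioi (0 : ℝ),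
        (if t ≤ 3 / 4 then -(4 * (4 * (n : ℝ) - 1) * t ^ 2 + 12 * t - 9 * (2 * n + 1)) / (8 * n * (4 * n + 1))
         else if t ≤ 3 / 2 then (3 - 2 * t) ^ 2 / (8 * n)
         else 0)
      = (3 * n + 1) / (2 * (2 * n + 1)) := by
  have hn1 : (1:ℝ) ≤ (n:ℝ) := by exact_mod_cast hn
  have hn0 : (n : ℝ) ≠ 0 := by positivity
  set g1 : ℝ → ℝ := fun t =>
    -(4 * (4 * (n : ℝ) - 1) * t ^ 2 + 12 * t - 9 * (2 * (n:ℝ) + 1)) / (8 * (n:ℝ) * (4 * (n:ℝ) + 1)) with hg1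
  set g2 : ℝ → ℝ := fun t => (3 - 2 * t) ^ 2 / (8 * (n:ℝ)) with hg2
  set f : ℝ → ℝ := fun t =>
    (if t ≤ 3 / 4 then -(4 * (4 * (n : ℝ) - 1) * t ^ 2 + 12 * t - 9 * (2 * n + 1)) / (8 * n * (4 * n + 1))
     else if t ≤ 3 / 2 then (3 - 2 * t) ^ 2 / (8 * n)
     else 0) with hf
  have h1 : Set.EqOn f g1 (Set.Ioc (0:ℝ) (3/4)) := by
    intro t ht; simp [hf, hg1, ht.2]
  have h2 : Set.EqOn f g2 (Set.Ioc (3/4:ℝ) (3/2)) := by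
    intro t ht; simp [hf, hg2, not_le_of_gt ht.1, ht.2]
  have h3 : Set.EqOn f 0 (Set.Ioi (3/2:ℝ)) := by
    intro t ht
    have hb : ¬ t ≤ 3/4 := by simp only [Set.mem_Ioi] at ht; push_neg; linarith
    have hc : ¬ t ≤ 3/2 := not_le_of_gt ht
    simp [hf, hb, hc]
  have hcg1 : Continuous g1 := by fun_prop
  have hcg2 : Continuous g2 := by fun_prop
  -- split Ioi 0 = Ioc 0 (3/4) ∪ Ioc (3/4) (3/2) ∪ Ioi (3/2)
  have hsplit1 : Set.Ioi (0:ℝ) = Set.Ioc 0 (3/2) ∪ Set.Ioi (3/2) := by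
    rw [Set.Ioc_union_Ioi_eq_Ioi]; norm_num
  have hsplit2 : Set.Ioc (0:ℝ) (3/2) = Set.Ioc 0 (3/4) ∪ Set.Ioc (3/4) (3/2) := by
    rw [Set.Ioc_union_Ioc_eq_Ioc] <;> norm_num
  have hi1 : IntegrableOn f (Set.Ioc (0:ℝ) (3/4)) :=
    (hcg1.integrableOn_Ioc).congr_fun h1.symm measurableSet_Ioc
  have hi2 : IntegrableOn f (Set.Ioc (3/4:ℝ) (3/2)) :=
    (hcg2.integrableOn_Ioc).congr_fun h2.symm measurableSet_Ioc
  have hi3 : IntegrableOn f (Set.Ioi (3/2:ℝ)) :=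
    (integrableOn_zero).congr_fun h3.symm measurableSet_Ioi
  have hi12 : IntegrableOn f (Set.Ioc (0:ℝ) (3/2)) := by
    rw [hsplit2]; exact hi1.union hi2
  have e3 : ∫ t in Set.Ioi (3/2:ℝ), f t = 0 := by
    rw [setIntegral_congr_fun measurableSet_Ioi h3]; simp
  have e1 : ∫ t in Set.Ioc (0:ℝ) (3/4), f t = ∫ t in (0:ℝ)..(3/4), g1 t := by
    rw [setIntegral_congr_fun measurableSet_Ioc h1,
      intervalIntegral.integral_of_le (by norm_num : (0:ℝ) ≤ 3/4)]
  have e2 : ∫ t in Set.Ioc (3/4:ℝ) (3/2), f t = ∫ t in (3/4:ℝ)..(3/2), g2 t := by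
    rw [setIntegral_congr_fun measurableSet_Ioc h2,
      intervalIntegral.integral_of_le (by norm_num : (3/4:ℝ) ≤ 3/2)]
  -- compute piece 1
  have hF1 : ∀ t : ℝ, HasDerivAt
      (fun t : ℝ => -(4 * (4 * (n:ℝ) - 1) * t ^ 3 / 3 + 6 * t ^ 2 - 9 * (2 * (n:ℝ) + 1) * t)
        / (8 * (n:ℝ) * (4 * (n:ℝ) + 1))) (g1 t) t := by
    intro t
    have h3 : HasDerivAt (fun t:ℝ => t^3) (3*t^2) t := by simpa using hasDerivAt_pow 3 t
    have h2' : HasDerivAt (fun t:ℝ => t^2) (2*t) t := by simpa using hasDerivAt_pow 2 t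
    have h1' : HasDerivAt (fun t:ℝ => t) 1 t := hasDerivAt_id t
    have := ((((h3.const_mul (4*(4*(n:ℝ)-1))).div_const 3).add (h2'.const_mul 6)).sub
      (h1'.const_mul (9*(2*(n:ℝ)+1)))).neg.div_const (8*(n:ℝ)*(4*(n:ℝ)+1))
    refine this.congr_deriv ?_
    simp [hg1]; ring
  have int1 : ∫ t in (0:ℝ)..(3/4), g1 t = (180 * (n:ℝ) + 63) / (128 * (n:ℝ) * (4 * (n:ℝ) + 1)) := by
    rw [intervalIntegral.integral_eq_sub_of_hasDerivAt (fun t _ => hF1 t)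
      (hcg1.intervalIntegrable _ _)]
    have h8 : (8 * (n:ℝ) * (4 * (n:ℝ) + 1)) ≠ 0 := by positivity
    field_simp
    ring
  -- compute piece 2
  have hF2 : ∀ t : ℝ, HasDerivAt
      (fun t : ℝ => -(3 - 2 * t) ^ 3 / (48 * (n:ℝ))) (g2 t) t := by
    intro t
    have hlin : HasDerivAt (fun t:ℝ => 3 - 2 * t) (-2) t := by
      simpa using ((hasDerivAt_id t).const_mul 2).const_sub 3
    have := ((hlin.pow 3).neg).div_const (48*(n:ℝ))
    refine this.congr_deriv ?_
    simp [hg2]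
    field_simp
    ring
  have int2 : ∫ t in (3/4:ℝ)..(3/2), g2 t = 9 / (128 * (n:ℝ)) := by
    rw [intervalIntegral.integral_eq_sub_of_hasDerivAt (fun t _ => hF2 t)
      (hcg2.intervalIntegrable _ _)]
    have h48 : (48 * (n:ℝ)) ≠ 0 := by positivity
    field_simp
    ring
  have etot : ∫ t in Set.Ioi (0:ℝ), f t =
      (180 * (n:ℝ) + 63) / (128 * (n:ℝ) * (4 * (n:ℝ) + 1)) + 9 / (128 * (n:ℝ)) := by
    rw [hsplit1, setIntegral_union (by
        rw [Set.disjoint_left]; intro a ha hb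
        exact absurd ha.2 (not_le_of_gt hb)) measurableSet_Ioi hi12 hi3, e3, add_zero,
      hsplit2, setIntegral_union (by
        rw [Set.disjoint_left]; intro a ha hb
        exact absurd ha.2 (not_le_of_gt hb.1)) measurableSet_Ioc hi1 hi2, e1, e2, int1, int2]
  rw [show (∫ t in Set.Ioi (0 : ℝ),
        (if t ≤ 3 / 4 then -(4 * (4 * (n : ℝ) - 1) * t ^ 2 + 12 * t - 9 * (2 * n + 1)) / (8 * n * (4 * n + 1))
         else if t ≤ 3 / 2 then (3 - 2 * t) ^ 2 / (8 * n)
         else 0)) = ∫ t in Set.Ioi (0:ℝ), f t from rfl, etot]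
  have hA : (128 * (n:ℝ) * (4 * (n:ℝ) + 1)) ≠ 0 := by positivity
  have hB : (9 * (2 * (n:ℝ) + 1)) ≠ 0 := by positivity
  have hC : (2 * (2 * (n:ℝ) + 1)) ≠ 0 := by positivity
  field_simp
  ring
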